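/- For every n ≥ 1 and all reals c < d, the image of the moment curve η: [c,d] → ℝⁿ, η(t) = (t, t², …, tⁿ), is a non-trivial self-affine set: there exists an affine IFS {f_i}_{i=1}^ℓ on ℝⁿ with η([c,d]) = ⋃_{i=1}^ℓ f_i(η([c,d])). -/

import Mathlib

open Set

/-- `f : ℝⁿ → ℝⁿ` is an invertible, strictly contractive affine map
(its linear part is bijective and has operator norm `< 1`). -/
def IsAffineContraction {n : ℕ}
    (f : EuclideanSpace ℝ (Fin n) → EuclideanSpace ℝ (Fin n)) : Prop :=
  ∃ (T : EuclideanSpace ℝ (Fin n) →L[ℝ] EuclideanSpace ℝ (Fin n))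
    (b : EuclideanSpace ℝ (Fin n)),
    Function.Bijective T ∧ ‖T‖ < 1 ∧ ∀ x, f x = T x + b

/-- `E ⊆ ℝⁿ` is self-affine: it is nonempty, compact and is the attractor of an
affine iterated function system. -/
def IsSelfAffine {n : ℕ} (E : Set (EuclideanSpace ℝ (Fin n))) : Prop :=
  E.Nonempty ∧ IsCompact E ∧
    ∃ (ℓ : ℕ) (f : Fin ℓ → (EuclideanSpace ℝ (Fin n) → EuclideanSpace ℝ (Fin n))),
      (∀ i, IsAffineContraction (f i)) ∧ E = ⋃ i, f i '' E

/-- The moment curve `t ↦ (t, t², …, tⁿ)` in ℝⁿ. -/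
def momentCurve (n : ℕ) (t : ℝ) : EuclideanSpace ℝ (Fin n) :=
  WithLp.toLp 2 (fun i => t ^ ((i : ℕ) + 1))

namespace MomentAux

lemma abs_apply_le_norm {n : ℕ} (x : EuclideanSpace ℝ (Fin n)) (i : Fin n) : |x i| ≤ ‖x‖ := by
  rw [EuclideanSpace.norm_eq]
  rw [show |x i| = Real.sqrt (|x i| ^ 2) by rw [Real.sqrt_sq_eq_abs, abs_abs]]
  apply Real.sqrt_le_sqrt
  calc |x i| ^ 2 = ‖x i‖ ^ 2 := by rw [Real.norm_eq_abs]
    _ ≤ ∑ j, ‖x j‖ ^ 2 :=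
        Finset.single_le_sum (f := fun j => ‖x j‖ ^ 2) (fun j _ => sq_nonneg _)
          (Finset.mem_univ i)

lemma norm_le_sum_abs {n : ℕ} (x : EuclideanSpace ℝ (Fin n)) : ‖x‖ ≤ ∑ i, |x i| := by
  have h1 : ∀ i : Fin n, (0:ℝ) ≤ |x i| := fun i => abs_nonneg _
  have hs : (0:ℝ) ≤ ∑ i, |x i| := Finset.sum_nonneg fun i _ => h1 i
  rw [EuclideanSpace.norm_eq,
    show (∑ i, |x i|) = Real.sqrt ((∑ i, |x i|) ^ 2) by rw [Real.sqrt_sq hs]]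
  apply Real.sqrt_le_sqrt
  calc ∑ i, ‖x i‖ ^ 2 = ∑ i, |x i| * |x i| := by simp [Real.norm_eq_abs, sq]
    _ ≤ ∑ i, |x i| * (∑ j, |x j|) :=
        Finset.sum_le_sum fun i _ => mul_le_mul_of_nonneg_left
          (Finset.single_le_sum (fun j _ => h1 j) (Finset.mem_univ i)) (h1 i)
    _ = (∑ i, |x i|) ^ 2 := by rw [← Finset.sum_mul, sq]

lemma choose_le_two_pow (m k : ℕ) : m.choose k ≤ 2 ^ m := by
  rcases le_or_gt k m with h | h
  · calc m.choose k ≤ ∑ j ∈ Finset.range (m+1), m.choose j :=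
        Finset.single_le_sum (f := fun j => m.choose j) (fun _ _ => Nat.zero_le _)
          (Finset.mem_range.mpr (Nat.lt_succ_of_le h))
      _ = 2 ^ m := Nat.sum_range_choose m
  · rw [Nat.choose_eq_zero_of_lt h]; exact Nat.zero_le _

/-- The binomial matrix of the substitution `t ↦ α t + β` on the moment curve. -/
def mat (n : ℕ) (α β : ℝ) : Matrix (Fin n) (Fin n) ℝ :=
  fun i j => (((i:ℕ)+1).choose ((j:ℕ)+1) : ℝ) * α ^ ((j:ℕ)+1) * β ^ ((i:ℕ) - (j:ℕ))

lemma moment_identity {n : ℕ} (α β t : ℝ) (i : Fin n) :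
    (α * t + β) ^ ((i:ℕ)+1)
      = (∑ j : Fin n, mat n α β i j * t ^ ((j:ℕ)+1)) + β ^ ((i:ℕ)+1) := by
  have hsub : (i:ℕ) + 1 ≤ n := i.2
  have hL : (∑ j : Fin n, mat n α β i j * t ^ ((j:ℕ)+1))
      = ∑ j ∈ Finset.range n,
          ((((i:ℕ)+1).choose (j+1) : ℝ) * α ^ (j+1) * β ^ ((i:ℕ) - j) * t ^ (j+1)) := by
    simp only [mat]
    exact Fin.sum_univ_eq_sum_range (fun j =>
      ((((i:ℕ)+1).choose (j+1) : ℝ) * α ^ (j+1) * β ^ ((i:ℕ) - j) * t ^ (j+1))) n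
  have hshrink : (∑ j ∈ Finset.range n,
        ((((i:ℕ)+1).choose (j+1) : ℝ) * α ^ (j+1) * β ^ ((i:ℕ) - j) * t ^ (j+1)))
      = ∑ j ∈ Finset.range ((i:ℕ)+1),
        ((((i:ℕ)+1).choose (j+1) : ℝ) * α ^ (j+1) * β ^ ((i:ℕ) - j) * t ^ (j+1)) := by
    refine (Finset.sum_subset (Finset.range_subset_range.mpr hsub) ?_).symm
    intro j _ hj
    have : (i:ℕ) + 1 < j + 1 := by
      have := Finset.mem_range.not.mp hj
      omega
    rw [Nat.choose_eq_zero_of_lt this]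
    simp
  rw [hL, hshrink, add_pow, Finset.sum_range_succ']
  congr 1
  · apply Finset.sum_congr rfl
    intro k _
    rw [Nat.succ_sub_succ, mul_pow]
    ring
  · simp

lemma continuous_momentCurve (n : ℕ) : Continuous (momentCurve n) := by
  have : momentCurve n
      = (WithLp.toLp 2) ∘ (fun (t : ℝ) (i : Fin n) => t ^ ((i:ℕ)+1)) := rfl
  rw [this]
  exact (PiLp.continuous_toLp _ _).comp (continuous_pi fun i => continuous_pow _)

lemma exists_affine (n : ℕ) (α β : ℝ) (hα : α ≠ 0)
    (hK : ∑ i : Fin n, ∑ j : Fin n, |mat n α β i j| < 1) :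
    ∃ f : EuclideanSpace ℝ (Fin n) → EuclideanSpace ℝ (Fin n),
      IsAffineContraction f ∧ ∀ t : ℝ, f (momentCurve n t) = momentCurve n (α * t + β) := by
  set M := mat n α β with hM
  let Tlin : EuclideanSpace ℝ (Fin n) →ₗ[ℝ] EuclideanSpace ℝ (Fin n) := Matrix.toEuclideanLin M
  let T : EuclideanSpace ℝ (Fin n) →L[ℝ] EuclideanSpace ℝ (Fin n) :=
    LinearMap.toContinuousLinearMap Tlin
  have hT : ∀ (x : EuclideanSpace ℝ (Fin n)) (i : Fin n), T x i = ∑ j, M i j * x j :=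
    fun x i => rfl
  have hdet : M.det ≠ 0 := by
    rw [Matrix.det_of_lowerTriangular M ?ht]
    · apply Finset.prod_ne_zero_iff.mpr
      intro i _
      have : M i i = α ^ ((i:ℕ)+1) := by
        simp [hM, mat, Nat.choose_self]
      rw [this]
      exact pow_ne_zero _ hα
    case ht =>
      intro i j hij
      have hji : (i:ℕ) < (j:ℕ) := hij
      have : (i:ℕ) + 1 < (j:ℕ) + 1 := by omega
      simp [hM, mat, Nat.choose_eq_zero_of_lt this]
  have hinj : Function.Injective T := by
    have h1 : Function.Injective M.mulVec :=
      Matrix.mulVec_injective_iff_isUnit.mpr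
        ((Matrix.isUnit_iff_isUnit_det M).mpr (isUnit_iff_ne_zero.mpr hdet))
    intro x y h
    exact WithLp.ofLp_injective 2 (h1 (by funext i; exact congrArg (fun v : EuclideanSpace ℝ (Fin n) => v i) h))
  have hbij : Function.Bijective T := by
    refine ⟨hinj, ?_⟩
    have : Function.Injective Tlin := hinj
    exact (LinearMap.injective_iff_surjective.mp this)
  have hK0 : (0:ℝ) ≤ ∑ i : Fin n, ∑ j : Fin n, |M i j| :=
    Finset.sum_nonneg fun i _ => Finset.sum_nonneg fun j _ => abs_nonneg _
  have hTnorm : ‖T‖ < 1 := by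
    refine lt_of_le_of_lt (ContinuousLinearMap.opNorm_le_bound T hK0 ?_) hK
    intro x
    calc ‖T x‖ ≤ ∑ i, |T x i| := norm_le_sum_abs _
      _ ≤ ∑ i : Fin n, ∑ j : Fin n, |M i j| * ‖x‖ := by
          apply Finset.sum_le_sum
          intro i _
          rw [hT]
          calc |∑ j, M i j * x j| ≤ ∑ j, |M i j * x j| := Finset.abs_sum_le_sum_abs _ _
            _ ≤ ∑ j, |M i j| * ‖x‖ := Finset.sum_le_sum fun j _ => by
                rw [abs_mul]
                exact mul_le_mul_of_nonneg_left (abs_apply_le_norm x j) (abs_nonneg _)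
      _ = (∑ i : Fin n, ∑ j : Fin n, |M i j|) * ‖x‖ := by
          rw [Finset.sum_mul]
          exact Finset.sum_congr rfl fun i _ => (Finset.sum_mul _ _ _).symm
  refine ⟨fun x => T x + momentCurve n β, ⟨T, momentCurve n β, hbij, hTnorm, fun x => rfl⟩, ?_⟩
  intro t
  ext i
  show T (momentCurve n t) i + (momentCurve n β) i = momentCurve n (α * t + β) i
  rw [hT]
  simpa [momentCurve] using (moment_identity α β t i).symm

lemma iUnion_Icc_step (c δ : ℝ) (hδ : 0 ≤ δ) (k : ℕ) :
    (⋃ i ∈ Finset.range (k+1), Icc (c + (i:ℝ)*δ) (c + ((i:ℝ)+1)*δ))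
      = Icc c (c + ((k:ℝ)+1)*δ) := by
  induction k with
  | zero => simp
  | succ k ih =>
    rw [Finset.range_add_one, Finset.set_biUnion_insert, ih, union_comm]
    push_cast
    rw [Icc_union_Icc_eq_Icc] <;> nlinarith [Nat.cast_nonneg (α := ℝ) k]

end MomentAux

open MomentAux in
/-- For every `n ≥ 1` and all reals `c < d`, the image of the moment
curve `η : [c,d] → ℝⁿ`, `η t = (t, t², …, tⁿ)`, is a non-trivial self-affine set. -/
theorem momentCurve_image_isSelfAffine
    (n : ℕ) (hn : 1 ≤ n) (c d : ℝ) (hcd : c < d) :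
    IsSelfAffine (momentCurve n '' Icc c d) ∧ (momentCurve n '' Icc c d).Nontrivial := by
  set B : ℝ := max 1 (3*(|c|+|d|)) with hBdef
  have hB1 : (1:ℝ) ≤ B := le_max_left _ _
  have hB3 : 3*(|c|+|d|) ≤ B := le_max_right _ _
  set X : ℝ := (n:ℝ)^2 * 2^n * B^n with hXdef
  have hX0 : 0 ≤ X := by positivity
  set ℓ : ℕ := ⌈X⌉₊ + 1 with hℓdef
  have hℓ1 : 1 ≤ ℓ := by omega
  set L : ℝ := (ℓ:ℝ) with hLdef
  have hL1 : (1:ℝ) ≤ L := by rw [hLdef]; exact_mod_cast hℓ1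
  have hL0 : (0:ℝ) < L := lt_of_lt_of_le one_pos hL1
  have hXL : X < L := by
    have := Nat.le_ceil X
    have h2 : ((⌈X⌉₊ : ℝ)) < L := by
      rw [hLdef, hℓdef]; push_cast; linarith
    linarith
  set αv : ℝ := 1 / L with hαdef
  have hα0 : 0 < αv := by positivity
  have hα1 : αv ≤ 1 := by
    rw [hαdef]; rw [div_le_one hL0]; linarith
  have hαne : αv ≠ 0 := ne_of_gt hα0
  set δ : ℝ := (d - c) * αv with hδdef
  have hδ0 : 0 ≤ δ := by
    apply mul_nonneg (by linarith) hα0.le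
  have hLδ : L * δ = d - c := by
    rw [hδdef, hαdef]; field_simp
  set β : Fin ℓ → ℝ := fun i => c + (i:ℝ)*δ - αv*c with hβdef
  -- bound on β
  have hβB : ∀ i : Fin ℓ, |β i| ≤ B := by
    intro i
    have hiℝ : ((i:ℕ):ℝ) ≤ L := by
      rw [hLdef]; exact_mod_cast (le_of_lt i.2)
    have hiδ : ((i:ℕ):ℝ) * δ ≤ d - c := by
      calc ((i:ℕ):ℝ) * δ ≤ L * δ := mul_le_mul_of_nonneg_right hiℝ hδ0
        _ = d - c := hLδ
    have hiδ0 : 0 ≤ ((i:ℕ):ℝ) * δ := mul_nonneg (Nat.cast_nonneg _) hδ0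
    have hαc : |αv * c| ≤ |c| := by
      rw [abs_mul, abs_of_pos hα0]
      calc αv * |c| ≤ 1 * |c| := mul_le_mul_of_nonneg_right hα1 (abs_nonneg _)
        _ = |c| := one_mul _
    have h1 : c ≤ |c| := le_abs_self c
    have h2 : -|c| ≤ c := neg_abs_le c
    have h3 : d ≤ |d| := le_abs_self d
    have h4 : -|d| ≤ d := neg_abs_le d
    have h5 : -|c| ≤ αv * c := neg_le_of_abs_le hαc
    have h6 : αv * c ≤ |c| := le_of_abs_le hαc
    rw [abs_le]
    constructor
    · rw [hβdef]; dsimp only; linarith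
    · rw [hβdef]; dsimp only; linarith
  -- sum bound
  have hKi : ∀ i : Fin ℓ, ∑ p : Fin n, ∑ q : Fin n, |mat n αv (β i) p q| < 1 := by
    intro i
    have hterm : ∀ p q : Fin n, |mat n αv (β i) p q| ≤ 2^n * αv * B^n := by
      intro p q
      have habs : |mat n αv (β i) p q|
          = ((((p:ℕ)+1).choose ((q:ℕ)+1) : ℝ)) * αv ^ ((q:ℕ)+1) * |β i| ^ ((p:ℕ)-(q:ℕ)) := by
        rw [mat, abs_mul, abs_mul, abs_pow, abs_pow, abs_of_pos hα0,
          abs_of_nonneg (by positivity : (0:ℝ) ≤ (((p:ℕ)+1).choose ((q:ℕ)+1) : ℝ))]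
      rw [habs]
      have hC : ((((p:ℕ)+1).choose ((q:ℕ)+1) : ℝ)) ≤ 2^n := by
        calc ((((p:ℕ)+1).choose ((q:ℕ)+1) : ℝ)) ≤ (2:ℝ)^((p:ℕ)+1) := by
              exact_mod_cast choose_le_two_pow ((p:ℕ)+1) ((q:ℕ)+1)
          _ ≤ (2:ℝ)^n := pow_le_pow_right₀ one_le_two p.2
      have hαp : αv ^ ((q:ℕ)+1) ≤ αv := by
        calc αv ^ ((q:ℕ)+1) ≤ αv ^ 1 :=
              pow_le_pow_of_le_one hα0.le hα1 (by omega)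
          _ = αv := pow_one _
      have hβp : |β i| ^ ((p:ℕ)-(q:ℕ)) ≤ B^n := by
        calc |β i| ^ ((p:ℕ)-(q:ℕ)) ≤ B ^ ((p:ℕ)-(q:ℕ)) :=
              pow_le_pow_left₀ (abs_nonneg _) (hβB i) _
          _ ≤ B^n := pow_le_pow_right₀ hB1 (by omega)
      calc ((((p:ℕ)+1).choose ((q:ℕ)+1) : ℝ)) * αv ^ ((q:ℕ)+1) * |β i| ^ ((p:ℕ)-(q:ℕ))
          ≤ (2^n * αv) * B^n := by
            apply mul_le_mul (mul_le_mul hC hαp (by positivity) (by positivity)) hβp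
              (by positivity) (by positivity)
        _ = 2^n * αv * B^n := rfl
    calc ∑ p : Fin n, ∑ q : Fin n, |mat n αv (β i) p q|
        ≤ ∑ _p : Fin n, ∑ _q : Fin n, (2^n * αv * B^n) :=
          Finset.sum_le_sum fun p _ => Finset.sum_le_sum fun q _ => hterm p q
      _ = (n:ℝ)^2 * 2^n * B^n * αv := by
          simp [Finset.sum_const, Finset.card_univ]
          ring
      _ = X * αv := by rw [hXdef]
      _ < 1 := by
          rw [hαdef, mul_one_div, div_lt_one hL0]
          exact hXL
  choose f hfc hfeq using fun i : Fin ℓ => exists_affine n αv (β i) hαne (hKi i)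
  set E : Set (EuclideanSpace ℝ (Fin n)) := momentCurve n '' Icc c d with hEdef
  -- image of each piece
  have himg : ∀ i : Fin ℓ,
      f i '' E = momentCurve n '' Icc (c + (i:ℝ)*δ) (c + ((i:ℝ)+1)*δ) := by
    intro i
    have h1 : f i '' E = (fun t => momentCurve n (αv * t + β i)) '' Icc c d := by
      rw [hEdef, ← image_comp]
      exact image_congr fun t _ => hfeq i t
    have h2 : (fun t => momentCurve n (αv * t + β i)) '' Icc c d
        = momentCurve n '' ((αv * · + β i) '' Icc c d) := by
      rw [← image_comp]; rfl
    have he1 : αv * c + β i = c + (i:ℝ)*δ := by simp only [hβdef]; ring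
    have he2 : αv * d + β i = c + ((i:ℝ)+1)*δ := by simp only [hβdef, hδdef]; ring
    rw [h1, h2, image_affine_Icc' hα0, he1, he2]
  -- covering
  have hcover : E = ⋃ i : Fin ℓ, f i '' E := by
    have hun : (⋃ i : Fin ℓ, Icc (c + (i:ℝ)*δ) (c + ((i:ℝ)+1)*δ)) = Icc c d := by
      have hfin : (⋃ i : Fin ℓ, Icc (c + (i:ℝ)*δ) (c + ((i:ℝ)+1)*δ))
          = ⋃ i ∈ Finset.range ℓ, Icc (c + (i:ℝ)*δ) (c + ((i:ℝ)+1)*δ) := by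
        ext x
        simp only [mem_iUnion, Finset.mem_range]
        constructor
        · rintro ⟨i, hx⟩; exact ⟨i, i.2, hx⟩
        · rintro ⟨i, hi, hx⟩; exact ⟨⟨i, hi⟩, hx⟩
      obtain ⟨m, hm⟩ : ∃ m, ℓ = m + 1 := ⟨⌈X⌉₊, rfl⟩
      rw [hfin, hm, iUnion_Icc_step c δ hδ0 m]
      have hm1 : ((m:ℝ)+1) = L := by rw [hLdef, hm]; push_cast; ring
      have hend : c + ((m:ℝ)+1)*δ = d := by rw [hm1]; linarith [hLδ]
      rw [hend]
    calc E = momentCurve n '' Icc c d := rfl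
      _ = momentCurve n '' (⋃ i : Fin ℓ, Icc (c + (i:ℝ)*δ) (c + ((i:ℝ)+1)*δ)) := by
          rw [hun]
      _ = ⋃ i : Fin ℓ, momentCurve n '' Icc (c + (i:ℝ)*δ) (c + ((i:ℝ)+1)*δ) :=
          image_iUnion
      _ = ⋃ i : Fin ℓ, f i '' E := by
          exact iUnion_congr fun i => (himg i).symm
  refine ⟨⟨⟨momentCurve n c, ⟨c, ⟨le_rfl, hcd.le⟩, rfl⟩⟩, ?_, ℓ, f, hfc, hcover⟩, ?_⟩
  · exact (isCompact_Icc).image (continuous_momentCurve n)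
  · refine ⟨momentCurve n c, ⟨c, ⟨le_rfl, hcd.le⟩, rfl⟩,
      momentCurve n d, ⟨d, ⟨hcd.le, le_rfl⟩, rfl⟩, ?_⟩
    intro h
    have := congrArg (fun v : EuclideanSpace ℝ (Fin n) => v ⟨0, hn⟩) h
    simp [momentCurve] at this
    exact hcd.ne this
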